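/- Let b ∈ ℝⁿ \ ℤⁿ, let S = b + ℤⁿ, and let B be a closed convex set with 0 ∈ int(B) whose interior contains no point of S. Then the inequality Σᵢ ψ_B(rᵢ) sᵢ ≥ 1 is valid for all points (s₁,…,s_k) ∈ ℝ^k with sᵢ ≥ 0 satisfying Σᵢ rᵢ sᵢ ∈ b + ℤⁿ, for any vectors r₁,…,r_k ∈ ℝⁿ. That is, the gauge of any S-free convex neighborhood of 0 yields a valid cut for the continuous corner relaxation. -/

import Mathlib

/-- The gauge of an `S`-free convex neighborhood of `0`, `S = b + ℤⁿ`, gives a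
valid cut for the continuous corner relaxation: if `sᵢ ≥ 0` and
`∑ᵢ sᵢ rᵢ ∈ b + ℤⁿ` then `∑ᵢ ψ_B(rᵢ) sᵢ ≥ 1`. -/
theorem gauge_valid_cut {n k : ℕ} (b : Fin n → ℝ)
    (hb : ¬ ∃ z : Fin n → ℤ, b = fun i => (z i : ℝ))
    (B : Set (Fin n → ℝ)) (hBcl : IsClosed B) (hBconv : Convex ℝ B)
    (h0 : (0 : Fin n → ℝ) ∈ interior B)
    (hfree : ∀ z : Fin n → ℤ, (b + fun i => (z i : ℝ)) ∉ interior B)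
    (r : Fin k → Fin n → ℝ) (s : Fin k → ℝ) (hs : ∀ i, 0 ≤ s i)
    (hmem : ∃ z : Fin n → ℤ, ∑ i, s i • r i = b + fun j => (z j : ℝ)) :
    1 ≤ ∑ i, gauge B (r i) * s i := by
  obtain ⟨z, hz⟩ := hmem
  by_contra hlt
  push_neg at hlt
  have hnhds : B ∈ nhds (0 : Fin n → ℝ) := mem_interior_iff_mem_nhds.mp h0
  have habs : Absorbent ℝ B := absorbent_nhds_zero hnhds
  have hsum : gauge B (∑ i, s i • r i) ≤ ∑ i, gauge B (r i) * s i := by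
    calc gauge B (∑ i, s i • r i) ≤ ∑ i, gauge B (s i • r i) := by
          classical
          induction (Finset.univ : Finset (Fin k)) using Finset.induction with
          | empty => simp [gauge_zero]
          | insert _ _ hx ih =>
            rw [Finset.sum_insert hx, Finset.sum_insert hx]
            exact le_trans (gauge_add_le hBconv habs _ _) (by linarith)
      _ = ∑ i, gauge B (r i) * s i := by
          refine Finset.sum_congr rfl fun i _ => ?_
          rw [gauge_smul_of_nonneg (hs i), smul_eq_mul, mul_comm]
  have : gauge B (∑ i, s i • r i) < 1 := lt_of_le_of_lt hsum hlt
  have hmemint : (∑ i, s i • r i) ∈ interior B :=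
    (gauge_lt_one_iff_mem_interior hBconv hnhds).mp this
  rw [hz] at hmemint
  exact hfree z hmemint
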